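/- In a directed graph obtained as the union Γ(i)⁺ ∪ Γ(i)⁻ of two directed path-trees structured as in the hemisphere construction (with a height function h assigning to each node a rational height such that every arc of Γ(i)⁺ strictly increases h and every arc of Γ(i)⁻ strictly decreases h, and such that the head of an increasing arc is never the tail of a decreasing arc and vice versa), there is at most one directed walk between any two nodes. -/

import Mathlib

/-- `UniqueWalks R` : in the digraph with arc relation `R`, between any two nodes
there is at most one directed walk (walks are nonempty lists of nodes chained by `R`). -/
def UniqueWalks {V : Type*} (R : V → V → Prop) : Prop :=
  ∀ (x y : V) (l₁ l₂ : List V),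
    l₁.Chain' R → l₂.Chain' R →
    l₁.head? = some x → l₂.head? = some x →
    l₁.getLast? = some y → l₂.getLast? = some y →
    l₁ = l₂

private lemma chain_lt_head_last {V : Type*} (h : V → ℚ) :
    ∀ (l : List V) (x y : V), l.Chain' (fun a b => h a < h b) →
      l.head? = some x → l.getLast? = some y → 2 ≤ l.length → h x < h y := by
  intro l
  induction l with
  | nil => intro x y _ hx; simp at hx
  | cons a t ih =>
    intro x y hc hx hy hlen
    simp at hx
    subst hx
    match t with
    | [] => simp at hlen
    | b :: t' =>
      simp only [List.Chain', List.isChain_cons_cons] at hc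
      obtain ⟨hab, hc'⟩ := hc
      match t' with
      | [] =>
        simp [List.getLast?] at hy
        subst hy; exact hab
      | c :: t'' =>
        have : (b :: c :: t'').getLast? = some y := by
          rw [List.getLast?_cons_cons] at hy ⊢; exact hy
        exact lt_trans hab (ih b y hc' rfl this (by simp))

private lemma chain_union_split {V : Type*} (Rp Rm : V → V → Prop)
    (hcomp₁ : ∀ x y z, Rp x y → Rm y z → False)
    (hcomp₂ : ∀ x y z, Rm x y → Rp y z → False) :
    ∀ l : List V, l.Chain' (fun x y => Rp x y ∨ Rm x y) →
      l.Chain' Rp ∨ l.Chain' Rm := by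
  intro l
  induction l with
  | nil => intro _; left; simp [List.Chain']
  | cons a t ih =>
    intro hc
    match t with
    | [] => left; simp [List.Chain']
    | b :: t' =>
      simp only [List.Chain', List.isChain_cons_cons] at hc
      obtain ⟨hab, hc'⟩ := hc
      rcases ih hc' with hp | hm
      · rcases hab with hab | hab
        · left; exact List.isChain_cons_cons.mpr ⟨hab, hp⟩
        · -- first arc Rm, rest Rp; if t' nonempty, contradiction
          match t' with
          | [] => right; exact List.isChain_cons_cons.mpr ⟨hab, by simp⟩
          | c :: t'' =>
            exact absurd (List.isChain_cons_cons.mp hp).1 (fun hbc => hcomp₂ a b c hab hbc)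
      · rcases hab with hab | hab
        · match t' with
          | [] => left; exact List.isChain_cons_cons.mpr ⟨hab, by simp⟩
          | c :: t'' =>
            exact absurd (List.isChain_cons_cons.mp hm).1 (fun hbc => hcomp₁ a b c hab hbc)
        · right; exact List.isChain_cons_cons.mpr ⟨hab, hm⟩

/-- In the union of two directed trees `Γ⁺` and `Γ⁻`, where a height function strictly
increases along arcs of `Γ⁺` and strictly decreases along arcs of `Γ⁻`, and where any
two composable arcs lie in the same part, there is at most one directed walk between
any two nodes. -/
theorem uniqueWalks_union {V : Type*} (Rp Rm : V → V → Prop) (h : V → ℚ)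
    (hup : ∀ x y, Rp x y → h x < h y)
    (hdn : ∀ x y, Rm x y → h y < h x)
    (hcomp₁ : ∀ x y z, Rp x y → Rm y z → False)
    (hcomp₂ : ∀ x y z, Rm x y → Rp y z → False)
    (hRp : UniqueWalks Rp) (hRm : UniqueWalks Rm) :
    UniqueWalks (fun x y => Rp x y ∨ Rm x y) := by
  intro x y l₁ l₂ hc₁ hc₂ hh₁ hh₂ hl₁ hl₂
  -- strict monotone versions
  have mono_p : ∀ (l : List V) (a b : V), l.Chain' Rp → l.head? = some a →
      l.getLast? = some b → 2 ≤ l.length → h a < h b := by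
    intro l a b hc ha hb hlen
    exact chain_lt_head_last h l a b (List.IsChain.imp (fun u v => hup u v) hc) ha hb hlen
  have mono_m : ∀ (l : List V) (a b : V), l.Chain' Rm → l.head? = some a →
      l.getLast? = some b → 2 ≤ l.length → h b < h a := by
    intro l a b hc ha hb hlen
    have := chain_lt_head_last (fun v => -h v) l a b
      (List.IsChain.imp (fun u v huv => by simpa using hdn u v huv) hc) ha hb hlen
    simpa using this
  -- split each chain
  rcases chain_union_split Rp Rm hcomp₁ hcomp₂ l₁ hc₁ with h₁p | h₁m <;>
    rcases chain_union_split Rp Rm hcomp₁ hcomp₂ l₂ hc₂ with h₂p | h₂m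
  · exact hRp x y l₁ l₂ h₁p h₂p hh₁ hh₂ hl₁ hl₂
  · -- l₁ is Rp-chain, l₂ is Rm-chain
    match l₁, l₂ with
    | [a], [b] =>
      simp at hh₁ hh₂; subst hh₁; subst hh₂; rfl
    | [a], b :: c :: t =>
      simp at hh₁ hl₁
      subst hh₁; subst hl₁
      exact absurd (mono_m _ a a h₂m hh₂ hl₂ (by simp)) (lt_irrefl _)
    | a :: c :: t, l₂ =>
      have hxy : h x < h y := mono_p _ x y h₁p hh₁ hl₁ (by simp)
      match l₂ with
      | [] => simp at hh₂
      | [b] =>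
        simp at hh₂ hl₂; subst hh₂; subst hl₂
        exact absurd hxy (lt_irrefl _)
      | b :: d :: t' =>
        have hyx : h y < h x := mono_m _ x y h₂m hh₂ hl₂ (by simp)
        exact absurd hxy (not_lt.mpr hyx.le)
  · -- l₁ is Rm-chain, l₂ is Rp-chain (symmetric)
    match l₁, l₂ with
    | [a], [b] =>
      simp at hh₁ hh₂; subst hh₁; subst hh₂; rfl
    | [a], b :: c :: t =>
      simp at hh₁ hl₁
      subst hh₁; subst hl₁
      exact absurd (mono_p _ a a h₂p hh₂ hl₂ (by simp)) (lt_irrefl _)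
    | a :: c :: t, l₂ =>
      have hyx : h y < h x := mono_m _ x y h₁m hh₁ hl₁ (by simp)
      match l₂ with
      | [] => simp at hh₂
      | [b] =>
        simp at hh₂ hl₂; subst hh₂; subst hl₂
        exact absurd hyx (lt_irrefl _)
      | b :: d :: t' =>
        have hxy : h x < h y := mono_p _ x y h₂p hh₂ hl₂ (by simp)
        exact absurd hxy (not_lt.mpr hyx.le)
  · exact hRm x y l₁ l₂ h₁m h₂m hh₁ hh₂ hl₁ hl₂
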